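/- Let k ≥ 3 be an integer, let g(p) = k·(2p(1−p)^k + k·p²·(1−p)^{k−1}) for p ∈ [0,1], and let p₀ = 1/(1 + √(k(k−1)/2)). Then 2 − g(p) is strictly decreasing on (0, p₀) and strictly increasing on (p₀, 1). Moreover, there is a unique p* ∈ (1/k, 1) with g(p*) = 1, and g(p) > 1 for all p ∈ (1/k, p*), while g(p) < 1 for all p ∈ (p*, 1]. -/

import Mathlib

/-- `g(p) = k·(2p(1−p)^k + k·p²·(1−p)^{k−1})`; note `2 − g(p) = U_{k,1,p}(2)`. -/
noncomputable def gfun (k : ℕ) (p : ℝ) : ℝ :=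
  (k:ℝ) * (2 * p * (1 - p) ^ k + (k:ℝ) * p ^ 2 * (1 - p) ^ (k - 1))

lemma gfun_hasDerivAt (k : ℕ) (hk : 3 ≤ k) (p : ℝ) :
    HasDerivAt (gfun k)
      ((k:ℝ) * (1 - p) ^ (k - 2) * (2 * (1 - p) ^ 2 - (k:ℝ) * ((k:ℝ) - 1) * p ^ 2)) p := by
  obtain ⟨m, rfl⟩ : ∃ m, k = m + 3 := ⟨k - 3, by omega⟩
  have h1 : HasDerivAt (fun p : ℝ => 1 - p) (-1) p := by
    exact (hasDerivAt_id' p).const_sub 1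
  have h2 := h1.pow (m + 3)
  have h3 := h1.pow (m + 2)
  have h4 : HasDerivAt (fun p : ℝ => 2 * p) 2 p := by
    simpa using (hasDerivAt_id p).const_mul (2:ℝ)
  have h5 : HasDerivAt (fun p : ℝ => p ^ 2) (2 * p) p := by
    simpa using hasDerivAt_pow 2 p
  have h6 := ((h4.mul h2).add ((h5.mul h3).const_mul ((m:ℝ)+3))).const_mul ((m:ℝ)+3)
  have he : gfun (m+3) = fun p : ℝ =>
      ((m:ℝ)+3) * (2 * p * (1-p)^(m+3) + ((m:ℝ)+3) * (p^2 * (1-p)^(m+2))) := by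
    funext q
    simp only [gfun]
    push_cast
    ring_nf
  rw [he]
  refine h6.congr_deriv ?_
  simp only [Nat.add_sub_cancel, show m+3-1 = m+2 from rfl, show m+3-2 = m+1 from rfl,
    show m+2-1 = m+1 from rfl, Pi.pow_apply]
  push_cast
  rw [show m + 3 = (m+2)+1 from rfl, show m+2 = (m+1)+1 from rfl, pow_succ, pow_succ]
  ring

lemma gfun_at_inv (k : ℕ) (hk : 3 ≤ k) :
    gfun k (1 / (k:ℝ)) = (1 - 1/(k:ℝ)) ^ (k-1) * (3 - 2/(k:ℝ)) := by
  have hk0 : (k:ℝ) ≠ 0 := by positivity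
  have hpow : (1 - 1/(k:ℝ)) ^ k = (1 - 1/(k:ℝ)) ^ (k-1) * (1 - 1/(k:ℝ)) := by
    rw [← pow_succ]
    congr 1
    omega
  simp only [gfun, hpow]
  field_simp
  ring

lemma gfun_inv_gt_one (k : ℕ) (hk : 3 ≤ k) : 1 < gfun k (1 / (k:ℝ)) := by
  rw [gfun_at_inv k hk]
  rcases lt_or_ge k 8 with h8 | h8
  · interval_cases k <;> norm_num
  · have hk0 : (0:ℝ) < k := by positivity
    set t : ℝ := 1 / ((k:ℝ) - 1) with ht
    have hk1 : (1:ℝ) < (k:ℝ) := by exact_mod_cast by omega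
    have hne : (k:ℝ) - 1 ≠ 0 := ne_of_gt (by linarith)
    have htpos : 0 < t := div_pos one_pos (by linarith)
    have hexp : 1 + t < Real.exp t := by
      have := Real.add_one_lt_exp (ne_of_gt htpos)
      linarith
    have hinv : Real.exp (-t) < 1 - 1/(k:ℝ) := by
      rw [Real.exp_neg]
      have h1t : (0:ℝ) < 1 + t := by linarith
      have : (1 + t)⁻¹ = 1 - 1/(k:ℝ) := by
        rw [ht]
        field_simp
        rw [sub_add_cancel, div_self hk0.ne']
      rw [← this]
      exact inv_strictAnti₀ h1t hexp
    have hpow : Real.exp (-1) < (1 - 1/(k:ℝ)) ^ (k-1) := by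
      have hcast : ((k - 1 : ℕ) : ℝ) = (k:ℝ) - 1 := by
        push_cast [Nat.cast_sub (by omega : 1 ≤ k)]; ring
      have he : Real.exp (-t) ^ (k-1) = Real.exp (-1) := by
        rw [← Real.exp_nat_mul, hcast, ht]
        congr 1
        field_simp
      calc Real.exp (-1) = Real.exp (-t) ^ (k-1) := he.symm
        _ < (1 - 1/(k:ℝ)) ^ (k-1) :=
            pow_lt_pow_left₀ hinv (Real.exp_pos _).le (by omega)
    have h3 : Real.exp 1 < 3 - 2/(k:ℝ) := by
      have : (2:ℝ)/(k:ℝ) ≤ 2/8 := by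
        apply div_le_div_of_nonneg_left (by norm_num) (by norm_num)
        exact_mod_cast h8
      have := Real.exp_one_lt_d9
      linarith
    have hep : 0 < Real.exp (-1) := Real.exp_pos _
    have h3p : (0:ℝ) < Real.exp 1 := Real.exp_pos _
    have key : Real.exp (-1) * Real.exp 1 < (1 - 1/(k:ℝ)) ^ (k-1) * (3 - 2/(k:ℝ)) :=
      mul_lt_mul hpow h3.le h3p (hep.trans hpow).le
    rwa [← Real.exp_add, neg_add_cancel, Real.exp_zero] at key

theorem U2_monotonicity_and_unique_root (k : ℕ) (hk : 3 ≤ k) :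
    StrictAntiOn (fun p : ℝ => 2 - gfun k p)
      (Set.Ioo (0:ℝ) (1 / (1 + Real.sqrt ((k:ℝ) * ((k:ℝ) - 1) / 2)))) ∧
    StrictMonoOn (fun p : ℝ => 2 - gfun k p)
      (Set.Ioo (1 / (1 + Real.sqrt ((k:ℝ) * ((k:ℝ) - 1) / 2))) 1) ∧
    ∃ pstar ∈ Set.Ioo (1 / (k:ℝ)) 1,
      gfun k pstar = 1 ∧
      (∀ q ∈ Set.Ioo (1 / (k:ℝ)) 1, gfun k q = 1 → q = pstar) ∧
      (∀ p ∈ Set.Ioo (1 / (k:ℝ)) pstar, 1 < gfun k p) ∧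
      (∀ p ∈ Set.Ioc pstar 1, gfun k p < 1) := by
  have hk0 : (0:ℝ) < (k:ℝ) := by positivity
  have hk3 : (3:ℝ) ≤ (k:ℝ) := by exact_mod_cast hk
  set s := Real.sqrt ((k:ℝ) * ((k:ℝ) - 1) / 2) with hs
  have hspos : 0 < s := Real.sqrt_pos.mpr (by nlinarith)
  have hs2 : s ^ 2 = (k:ℝ) * ((k:ℝ) - 1) / 2 := Real.sq_sqrt (by nlinarith)
  set p₀ := 1 / (1 + s) with hp₀
  have hp₀pos : 0 < p₀ := by positivity
  have hp₀lt1 : p₀ < 1 := by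
    rw [hp₀, div_lt_one (by linarith)]; linarith
  have hsk : s < (k:ℝ) - 1 := by
    have h : s ^ 2 < ((k:ℝ) - 1) ^ 2 := by nlinarith
    nlinarith [hspos]
  have hkp₀ : 1 / (k:ℝ) < p₀ := by
    rw [hp₀, div_lt_div_iff₀ hk0 (by linarith)]
    linarith
  have hcont : Continuous (gfun k) := by unfold gfun; fun_prop
  -- derivative sign
  have hDpos : ∀ x : ℝ, 0 ≤ x → x < p₀ →
      0 < (k:ℝ) * (1 - x) ^ (k - 2) * (2 * (1 - x) ^ 2 - (k:ℝ) * ((k:ℝ) - 1) * x ^ 2) := by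
    intro x hx0 hxp
    have hx1 : x < 1 := hxp.trans hp₀lt1
    have h1 : x * (1 + s) < 1 := by
      rw [hp₀, lt_div_iff₀ (by linarith)] at hxp
      linarith
    have h2 : x * s < 1 - x := by nlinarith
    have h3 : (x * s) ^ 2 < (1 - x) ^ 2 := by nlinarith [mul_nonneg hx0 hspos.le]
    have h4 : 0 < 2 * (1 - x) ^ 2 - (k:ℝ) * ((k:ℝ) - 1) * x ^ 2 := by nlinarith [hs2]
    have h5 : (0:ℝ) < (1 - x) ^ (k - 2) := pow_pos (by linarith) _
    positivity
  have hDneg : ∀ x : ℝ, p₀ < x → x < 1 →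
      (k:ℝ) * (1 - x) ^ (k - 2) * (2 * (1 - x) ^ 2 - (k:ℝ) * ((k:ℝ) - 1) * x ^ 2) < 0 := by
    intro x hxp hx1
    have hx0 : 0 < x := hp₀pos.trans hxp
    have h1 : 1 < x * (1 + s) := by
      rw [hp₀, div_lt_iff₀ (by linarith)] at hxp
      linarith
    have h2 : 1 - x < x * s := by nlinarith
    have h3 : (1 - x) ^ 2 < (x * s) ^ 2 := by nlinarith
    have h4 : 2 * (1 - x) ^ 2 - (k:ℝ) * ((k:ℝ) - 1) * x ^ 2 < 0 := by nlinarith [hs2]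
    have h5 : (0:ℝ) < (1 - x) ^ (k - 2) := pow_pos (by linarith) _
    exact mul_neg_of_pos_of_neg (by positivity) h4
  have hderiv : ∀ x : ℝ, deriv (fun p : ℝ => 2 - gfun k p) x =
      -((k:ℝ) * (1 - x) ^ (k - 2) * (2 * (1 - x) ^ 2 - (k:ℝ) * ((k:ℝ) - 1) * x ^ 2)) := by
    intro x
    have := ((hasDerivAt_const x (2:ℝ)).sub (gfun_hasDerivAt k hk x))
    exact this.deriv.trans (zero_sub _)
  have hgderiv : ∀ x : ℝ, deriv (gfun k) x =
      (k:ℝ) * (1 - x) ^ (k - 2) * (2 * (1 - x) ^ 2 - (k:ℝ) * ((k:ℝ) - 1) * x ^ 2) :=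
    fun x => (gfun_hasDerivAt k hk x).deriv
  have hFcont : Continuous (fun p : ℝ => 2 - gfun k p) := by fun_prop
  -- monotonicity of gfun on Icc
  have gmono : StrictMonoOn (gfun k) (Set.Icc (1/(k:ℝ)) p₀) := by
    apply strictMonoOn_of_deriv_pos (convex_Icc _ _) hcont.continuousOn
    intro x hx
    rw [interior_Icc] at hx
    rw [hgderiv x]
    exact hDpos x (le_of_lt ((by positivity : (0:ℝ) < 1/(k:ℝ)).trans hx.1)) hx.2
  have ganti : StrictAntiOn (gfun k) (Set.Icc p₀ 1) := by
    apply strictAntiOn_of_deriv_neg (convex_Icc _ _) hcont.continuousOn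
    intro x hx
    rw [interior_Icc] at hx
    rw [hgderiv x]
    exact hDneg x hx.1 hx.2
  refine ⟨?_, ?_, ?_⟩
  · apply strictAntiOn_of_deriv_neg (convex_Ioo _ _) hFcont.continuousOn
    intro x hx
    rw [interior_Ioo] at hx
    rw [hderiv x]
    simpa using hDpos x hx.1.le hx.2
  · apply strictMonoOn_of_deriv_pos (convex_Ioo _ _) hFcont.continuousOn
    intro x hx
    rw [interior_Ioo] at hx
    rw [hderiv x]
    simpa using hDneg x hx.1 hx.2
  · have hg1 : gfun k 1 = 0 := by
      simp [gfun, zero_pow (by omega : k ≠ 0), zero_pow (by omega : k - 1 ≠ 0)]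
    have hginv := gfun_inv_gt_one k hk
    have hgp₀ : 1 < gfun k p₀ := by
      have := gmono ⟨le_refl _, hkp₀.le⟩ ⟨hkp₀.le, le_refl _⟩ hkp₀
      linarith
    have hmem : (1:ℝ) ∈ Set.Ioo (gfun k 1) (gfun k p₀) := by
      rw [hg1]; exact ⟨one_pos, hgp₀⟩
    obtain ⟨pstar, hps, hpse⟩ :=
      intermediate_value_Ioo' hp₀lt1.le hcont.continuousOn hmem
    have hpsIcc : pstar ∈ Set.Icc p₀ 1 := ⟨hps.1.le, hps.2.le⟩
    refine ⟨pstar, ⟨hkp₀.trans hps.1, hps.2⟩, hpse, ?_, ?_, ?_⟩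
    · intro q hq hq1
      rcases le_or_gt q p₀ with hqp | hqp
      · exfalso
        have := gmono ⟨le_refl _, hkp₀.le⟩ ⟨hq.1.le, hqp⟩ hq.1
        linarith
      · exact ganti.injOn ⟨hqp.le, hq.2.le⟩ hpsIcc (hq1.trans hpse.symm)
    · intro p hp
      rcases le_or_gt p p₀ with hpp | hpp
      · have := gmono ⟨le_refl _, hkp₀.le⟩ ⟨hp.1.le, hpp⟩ hp.1
        linarith
      · have := ganti ⟨hpp.le, (hp.2.trans hps.2).le⟩ hpsIcc hp.2
        rw [hpse] at this
        linarith
    · intro p hp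
      have := ganti hpsIcc ⟨(hps.1.trans hp.1).le, hp.2⟩ hp.1
      rw [hpse] at this
      linarith
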